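/- Let X_1, ..., X_n and Y be T0 spaces and f : X_1 × ⋯ × X_n → Y separately continuous. The induced map f^γ : Γ(X_1) × ⋯ × Γ(X_n) → Γ(Y) defined by f^γ(A_1, ..., A_n) = cl(f(A_1 × ⋯ × A_n)) is Scott-continuous. -/

import Mathlib

open Set

/-- `Γ(Z)`: nonempty closed subsets of `Z`, ordered by inclusion. -/
abbrev Gamma (Z : Type*) [TopologicalSpace Z] := {A : Set Z // IsClosed A ∧ A.Nonempty}

/-- The lifted map `f^γ(A₁,…,Aₙ) = cl (f(A₁ × ⋯ × Aₙ))`. -/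
noncomputable def fgamma {ι : Type*} {X : ι → Type*} [∀ i, TopologicalSpace (X i)]
    {Y : Type*} [TopologicalSpace Y] (f : (∀ i, X i) → Y)
    (A : ∀ i, Gamma (X i)) : Gamma Y :=
  ⟨closure (f '' Set.univ.pi fun i => (A i).1), isClosed_closure,
    ⟨f (fun i => ((A i).2.2).choose),
      subset_closure ⟨fun i => ((A i).2.2).choose, fun i _ => ((A i).2.2).choose_spec, rfl⟩⟩⟩

/-- For a separately continuous `f`, the lifted map `f^γ : Γ(X₁) × ⋯ × Γ(Xₙ) → Γ(Y)`
is Scott continuous. -/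
theorem stmt_12 {ι : Type*} [Fintype ι] [DecidableEq ι] {X : ι → Type*}
    [∀ i, TopologicalSpace (X i)] [∀ i, T0Space (X i)]
    {Y : Type*} [TopologicalSpace Y] [T0Space Y]
    (f : (∀ i, X i) → Y)
    (hf : ∀ (i : ι) (x : ∀ i, X i), Continuous fun t : X i => f (Function.update x i t)) :
    ScottContinuous (fgamma f) := by
  classical
  intro D hD hdir A hA
  have hmono : Monotone (fgamma f) := by
    intro B B' h
    exact closure_mono (Set.image_mono (Set.pi_mono fun i _ => h i))
  constructor
  · rintro _ ⟨B, hB, rfl⟩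
    exact hmono (hA.1 hB)
  · intro C hC
    have hC' : ∀ B ∈ D, f '' Set.univ.pi (fun i => (B i).1) ⊆ C.1 := fun B hB =>
      subset_closure.trans (hC ⟨B, hB, rfl⟩)
    obtain ⟨B0, hB0⟩ := hD
    -- each component of A is contained in the closure of the union of components
    have hAi : ∀ i, (A i).1 ⊆ closure (⋃ B ∈ D, (B i).1) := by
      intro i
      have hne : (closure (⋃ B ∈ D, (B i).1)).Nonempty :=
        ((B0 i).2.2).mono ((Set.subset_biUnion_of_mem hB0).trans subset_closure)
      set Ci : Gamma (X i) := ⟨closure (⋃ B ∈ D, (B i).1), isClosed_closure, hne⟩ with hCi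
      have hub : Function.update A i Ci ∈ upperBounds D := by
        intro B hB j
        by_cases hj : j = i
        · subst hj
          rw [Function.update_self]
          intro y hy
          exact subset_closure (Set.mem_biUnion hB hy)
        · rw [Function.update_of_ne hj]
          exact hA.1 hB j
      have := hA.2 hub i
      rwa [Function.update_self] at this
    -- key induction: swap coordinates one at a time
    have key : ∀ s : Finset ι, ∀ x : ∀ i, X i,
        (∀ j ∈ s, x j ∈ (A j).1) → (∃ B ∈ D, ∀ j ∉ s, x j ∈ (B j).1) → f x ∈ C.1 := by
      intro s
      induction s using Finset.induction_on with
      | empty =>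
        rintro x _ ⟨B, hB, hx⟩
        exact hC' B hB ⟨x, fun j _ => hx j (by simp), rfl⟩
      | @insert i s' hi ih =>
        rintro x hxs ⟨B, hB, hxB⟩
        have hsub : (A i).1 ⊆ (fun t => f (Function.update x i t)) ⁻¹' C.1 := by
          refine (hAi i).trans (closure_minimal ?_ (C.2.1.preimage (hf i x)))
          rintro t ht
          simp only [Set.mem_iUnion] at ht
          obtain ⟨B', hB', ht⟩ := ht
          obtain ⟨B'', hB'', h1, h2⟩ := hdir B hB B' hB'
          refine ih (Function.update x i t) ?_ ⟨B'', hB'', ?_⟩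
          · intro j hj
            rw [Function.update_of_ne (by rintro rfl; exact hi hj)]
            exact hxs j (Finset.mem_insert_of_mem hj)
          · intro j hj
            by_cases hji : j = i
            · subst hji
              rw [Function.update_self]
              exact h2 j ht
            · rw [Function.update_of_ne hji]
              exact h1 j (hxB j (by simp [hji, hj]))
        have := hsub (hxs i (Finset.mem_insert_self i s'))
        simpa [Function.update_eq_self] using this
    -- conclude
    intro y hy
    refine closure_minimal ?_ C.2.1 hy
    rintro _ ⟨x, hx, rfl⟩
    exact key Finset.univ x (fun j _ => hx j trivial)
      ⟨B0, hB0, fun j hj => absurd (Finset.mem_univ j) hj⟩
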